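/- Let G = (V,E) be a finite undirected simple graph, h a positive integer, v ∈ V, and u ∈ N_v^h(G) with s = dis_G(u,v). Define F_u = {w ∈ N_v^{h-s}(G) : dis_{G(V \ {v})}(u,w) > h}. Then the h-degree of u decreases by exactly 1 + |F_u| when v is deleted: d_u^h(G) − d_u^h(G(V \ {v})) = 1 + |F_u|. -/

import Mathlib

open SimpleGraph

variable {V : Type*} [Fintype V] [DecidableEq V]

/-- The subgraph of `G` induced by the vertex set `S`, viewed as a graph on the
same vertex type (edges are exactly the edges of `G` with both endpoints in `S`). -/
def SimpleGraph.inducedOn (G : SimpleGraph V) (S : Set V) : SimpleGraph V where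
  Adj x y := G.Adj x y ∧ x ∈ S ∧ y ∈ S
  symm := ⟨fun _ _ ⟨ha, hx, hy⟩ => ⟨ha.symm, hy, hx⟩⟩
  loopless := ⟨fun _ ⟨ha, _, _⟩ => G.irrefl ha⟩

/-- The `h`-hop neighborhood of `v` in `G`:
all vertices `u ≠ v` with `dis_G(v,u) ≤ h`. -/
def SimpleGraph.hNbhd (G : SimpleGraph V) (h : ℕ) (v : V) : Set V :=
  {u | u ≠ v ∧ G.edist v u ≤ (h : ℕ∞)}

/-- The `h`-degree of `v` in `G`: the number of vertices in its `h`-hop neighborhood. -/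
noncomputable def SimpleGraph.hDeg (G : SimpleGraph V) (h : ℕ) (v : V) : ℕ :=
  (G.hNbhd h v).ncard


lemma inducedOn_le (G : SimpleGraph V) (S : Set V) : G.inducedOn S ≤ G :=
  fun _ _ hxy => hxy.1

lemma edist_inducedOn_top (G : SimpleGraph V) (v u : V) (huv : u ≠ v) :
    (G.inducedOn {v}ᶜ).edist u v = ⊤ := by
  apply SimpleGraph.edist_eq_top_of_not_reachable
  intro hr
  obtain ⟨p⟩ := hr.symm
  cases p with
  | nil => exact huv rfl
  | cons ha _ => exact ha.2.1 rfl

/-- If a walk in `G` avoids `v`, its length bounds the edist in the induced graph. -/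
lemma edist_inducedOn_le_of_avoid {G : SimpleGraph V} {v x y : V} (p : G.Walk x y)
    (hv : v ∉ p.support) : (G.inducedOn {v}ᶜ).edist x y ≤ p.length := by
  have hedges : ∀ e ∈ p.edges, e ∈ (G.inducedOn {v}ᶜ).edgeSet := by
    intro e he
    induction e using Sym2.ind with
    | _ a b =>
      refine ⟨p.edges_subset_edgeSet he, ?_, ?_⟩
      · intro hav; subst hav; exact hv (p.fst_mem_support_of_mem_edges he)
      · intro hbv; subst hbv; exact hv (p.snd_mem_support_of_mem_edges he)
  have := SimpleGraph.edist_le (p.transfer (G.inducedOn {v}ᶜ) hedges)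
  rwa [SimpleGraph.Walk.length_transfer] at this

/-- The `h`-degree of `u` decreases by exactly `1 + |F_u|` when `v` is deleted, where
`F_u = {w ∈ N_v^{h-s}(G) : dis_{G(V∖{v})}(u,w) > h}`. -/
theorem stmt3 (G : SimpleGraph V) (h : ℕ) (hpos : 0 < h) (v u : V) (s : ℕ)
    (hu : u ∈ G.hNbhd h v) (hs : G.edist u v = (s : ℕ∞)) :
    G.hDeg h u - (G.inducedOn {v}ᶜ).hDeg h u =
      1 + {w ∈ G.hNbhd (h - s) v | (h : ℕ∞) < (G.inducedOn {v}ᶜ).edist u w}.ncard := by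
  set G' := G.inducedOn {v}ᶜ with hG'
  obtain ⟨huv, hvu⟩ := hu
  have hsh : s ≤ h := by
    have : (s : ℕ∞) ≤ (h : ℕ∞) := by rw [← hs, SimpleGraph.edist_comm]; exact hvu
    exact_mod_cast this
  set A := G.hNbhd h u with hA
  set B := G'.hNbhd h u with hB
  set F := {w ∈ G.hNbhd (h - s) v | (h : ℕ∞) < G'.edist u w} with hF
  have hBA : B ⊆ A := by
    intro x ⟨hx1, hx2⟩
    exact ⟨hx1, le_trans (SimpleGraph.edist_anti (inducedOn_le G _)) hx2⟩
  have hdiff : A \ B = insert v F := by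
    ext x
    constructor
    · rintro ⟨⟨hxu, hdx⟩, hxB⟩
      have hGx : (h : ℕ∞) < G'.edist u x := by
        by_contra hle
        push_neg at hle
        exact hxB ⟨hxu, hle⟩
      by_cases hxv : x = v
      · exact Or.inl hxv
      right
      have hne : G.edist u x ≠ ⊤ := fun ht => by simp [ht] at hdx
      obtain ⟨p, hp⟩ := SimpleGraph.exists_walk_of_edist_ne_top hne
      have hvp : v ∈ p.support := by
        by_contra hvp
        have := edist_inducedOn_le_of_avoid p hvp
        rw [hp] at this
        exact absurd (le_trans this hdx) (not_le.mpr hGx)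
      have hsplit : G.edist u v + G.edist v x ≤ (h : ℕ∞) := by
        have h1 := SimpleGraph.edist_le (p.takeUntil v hvp)
        have h2 := SimpleGraph.edist_le (p.dropUntil v hvp)
        have hlen : (p.takeUntil v hvp).length + (p.dropUntil v hvp).length = p.length := by
          rw [← SimpleGraph.Walk.length_append, SimpleGraph.Walk.take_spec]
        calc G.edist u v + G.edist v x
            ≤ ((p.takeUntil v hvp).length : ℕ∞) + ((p.dropUntil v hvp).length : ℕ∞) :=
              add_le_add h1 h2
          _ = (p.length : ℕ∞) := by rw [← Nat.cast_add, hlen]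
          _ ≤ (h : ℕ∞) := by rw [hp]; exact hdx
      rw [hs] at hsplit
      have hvx : G.edist v x ≤ ((h - s : ℕ) : ℕ∞) := by
        have hcast : (s : ℕ∞) + ((h - s : ℕ) : ℕ∞) = (h : ℕ∞) := by
          rw [← Nat.cast_add, Nat.add_sub_cancel' hsh]
        rw [← hcast] at hsplit
        exact (WithTop.add_le_add_iff_left (ENat.coe_ne_top s)).mp hsplit
      exact ⟨⟨hxv, hvx⟩, hGx⟩
    · intro hx
      rcases hx with hxeq | ⟨⟨hxv, hvx⟩, hGx⟩
      · rw [hxeq]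
        refine ⟨⟨fun hh => huv hh.symm, by rw [hs]; exact_mod_cast hsh⟩, ?_⟩
        rintro ⟨_, hle⟩
        rw [edist_inducedOn_top G v u huv] at hle
        exact absurd hle (by simp)
      · refine ⟨⟨?_, ?_⟩, ?_⟩
        · rintro rfl
          rw [SimpleGraph.edist_self] at hGx
          exact absurd hGx (by simp)
        · calc G.edist u x ≤ G.edist u v + G.edist v x := SimpleGraph.edist_triangle
            _ ≤ (s : ℕ∞) + ((h - s : ℕ) : ℕ∞) := by rw [hs]; exact add_le_add_right hvx _
            _ = (h : ℕ∞) := by rw [← Nat.cast_add, Nat.add_sub_cancel' hsh]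
        · rintro ⟨_, hle⟩
          exact absurd hle (not_le.mpr hGx)
  have hvF : v ∉ F := fun hmem => hmem.1.1 rfl
  have hcount : G.hDeg h u - G'.hDeg h u = (A \ B).ncard := by
    rw [Set.ncard_diff hBA (Set.toFinite _)]
    rfl
  rw [hcount, hdiff, Set.ncard_insert_of_notMem hvF (Set.toFinite _), add_comm]
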